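/- Define v, r : ℝ → ℝ by v(s) = e^s and r(s) = √(1 + e^{2s}), and let β : ℝ → ℝ be any differentiable function with β'(s) = −2e^s + √(1 + 2e^{2s})/(1 + e^{2s}) for all s. Then for every s ∈ ℝ: (i) r(s)² − v(s)² = 1; (ii) v'(s) = v(s); (iii) r(s)²(β'(s) + 2v(s))² = 1 + e^{2s}/(1 + e^{2s}); and (iv) r'(s)² + r(s)²(β'(s) + 2v(s))² − v'(s)² = 1. -/

import Mathlib

/-- **Explicit non-Legendre contact whirl data in the Heisenberg space
(Section 5.2.1).**  With `v(s) = e^s`, `r(s) = √(1 + e^{2s})` and `β` any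
differentiable function with
`β' = −2e^s + √(1 + 2e^{2s})/(1 + e^{2s})`, one has for every `s`:
(i) `r² − v² = 1` (unit spacelike tangent);
(ii) `v' = v` (the whirl equation with `λ₀ = 1`);
(iii) `r²(β' + 2v)² = 1 + e^{2s}/(1 + e^{2s})`;
(iv) `r'² + r²(β' + 2v)² − v'² = 1` (constant curvature `κ = 1`). -/
theorem heisenberg_explicit_whirl_example
    (v r β : ℝ → ℝ)
    (hv : v = fun s => Real.exp s)
    (hr : r = fun s => Real.sqrt (1 + Real.exp (2 * s)))
    (hβ : ∀ s : ℝ, HasDerivAt β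
      (-2 * Real.exp s
        + Real.sqrt (1 + 2 * Real.exp (2 * s)) / (1 + Real.exp (2 * s))) s) :
    ∀ s : ℝ,
      (r s) ^ 2 - (v s) ^ 2 = 1 ∧
      HasDerivAt v (v s) s ∧
      (r s) ^ 2 * (deriv β s + 2 * v s) ^ 2
        = 1 + Real.exp (2 * s) / (1 + Real.exp (2 * s)) ∧
      (deriv r s) ^ 2 + (r s) ^ 2 * (deriv β s + 2 * v s) ^ 2
        - (deriv v s) ^ 2 = 1 := by
  intro s
  have hE : (0:ℝ) < Real.exp (2 * s) := Real.exp_pos _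
  have hpos : (0:ℝ) < 1 + Real.exp (2 * s) := by linarith
  have hpos2 : (0:ℝ) ≤ 1 + 2 * Real.exp (2 * s) := by linarith
  have hr2 : (r s) ^ 2 = 1 + Real.exp (2 * s) := by
    rw [hr]; exact Real.sq_sqrt hpos.le
  have hv2 : (v s) ^ 2 = Real.exp (2 * s) := by
    rw [hv]; simp [← Real.exp_add, two_mul, pow_two]
  have hsq2 : (Real.sqrt (1 + 2 * Real.exp (2 * s))) ^ 2
      = 1 + 2 * Real.exp (2 * s) := Real.sq_sqrt hpos2
  -- derivative of v
  have hvderiv : HasDerivAt v (v s) s := by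
    rw [hv]; simpa using Real.hasDerivAt_exp s
  -- derivative of r
  have hf : HasDerivAt (fun s => 1 + Real.exp (2 * s)) (2 * Real.exp (2 * s)) s := by
    have h1 : HasDerivAt (fun s : ℝ => Real.exp (2 * s)) (Real.exp (2 * s) * 2) s :=
      (Real.hasDerivAt_exp (2 * s)).comp s (by simpa using (hasDerivAt_id s).const_mul 2)
    simpa [mul_comm] using h1.const_add 1
  have hrderiv : HasDerivAt r
      (2 * Real.exp (2 * s) / (2 * Real.sqrt (1 + Real.exp (2 * s)))) s := by
    rw [hr]; exact hf.sqrt hpos.ne'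
  have hβv : deriv β s + 2 * v s
      = Real.sqrt (1 + 2 * Real.exp (2 * s)) / (1 + Real.exp (2 * s)) := by
    rw [(hβ s).deriv, hv]; ring
  have hβ2 : (r s) ^ 2 * (deriv β s + 2 * v s) ^ 2
      = (1 + 2 * Real.exp (2 * s)) / (1 + Real.exp (2 * s)) := by
    rw [hβv, hr2, div_pow, hsq2]
    field_simp
  refine ⟨by rw [hr2, hv2]; ring, hvderiv, ?_, ?_⟩
  · rw [hβ2]; field_simp; ring
  · have hr' : deriv r s
        = Real.exp (2 * s) / Real.sqrt (1 + Real.exp (2 * s)) := by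
      rw [hrderiv.deriv, mul_div_mul_left _ _ (two_ne_zero)]
    have hsqrt2 : (Real.sqrt (1 + Real.exp (2 * s))) ^ 2 = 1 + Real.exp (2 * s) :=
      Real.sq_sqrt hpos.le
    have hsqne : Real.sqrt (1 + Real.exp (2 * s)) ≠ 0 :=
      (Real.sqrt_pos.2 hpos).ne'
    rw [hvderiv.deriv, hβ2, hr', div_pow, hsqrt2, hv2]
    field_simp
    ring
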